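/- arXiv:2512.14124 — 2 statements merged into one kernel-verified Lean document; each statement's English description precedes it below -/
import Mathlib

section
/- Let f : ℝ^m → ℝ ∪ {∞} be a proper convex function with x̄ ∈ dom f and ū ∈ ∂f(x̄). If d ∈ ℝ^m satisfies d²f(x̄, ū)(d) < ∞, then the first-order directional derivative of f at x̄ in direction d equals ⟨ū, d⟩; that is, dom d²f(x̄, ū) ⊆ {d | df(x̄)(d) = ⟨ū, d⟩}. -/
open scoped RealInnerProductSpace Topology

/-- Second-order subderivative `d²f(x̄,ū)(d)` (with `f x̄ = r ∈ ℝ`). -/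
noncomputable def secondSubderiv {m : ℕ} (f : EuclideanSpace ℝ (Fin m) → EReal)
    (x : EuclideanSpace ℝ (Fin m)) (r : ℝ) (u d : EuclideanSpace ℝ (Fin m)) : EReal :=
  Filter.liminf
    (fun p : ℝ × EuclideanSpace ℝ (Fin m) =>
      ((2 / p.1 ^ 2 : ℝ) : EReal) * (f (x + p.1 • p.2) - ((r + p.1 * ⟪u, p.2⟫ : ℝ) : EReal)))
    ((𝓝[>] (0 : ℝ)) ×ˢ 𝓝 d)

/-- First-order subderivative `df(x̄)(d)` (with `f x̄ = r ∈ ℝ`). -/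
noncomputable def firstSubderiv {m : ℕ} (f : EuclideanSpace ℝ (Fin m) → EReal)
    (x : EuclideanSpace ℝ (Fin m)) (r : ℝ) (d : EuclideanSpace ℝ (Fin m)) : EReal :=
  Filter.liminf
    (fun p : ℝ × EuclideanSpace ℝ (Fin m) =>
      ((p.1⁻¹ : ℝ) : EReal) * (f (x + p.1 • p.2) - (r : EReal)))
    ((𝓝[>] (0 : ℝ)) ×ˢ 𝓝 d)

theorem stmt5 {m : ℕ} (f : EuclideanSpace ℝ (Fin m) → EReal)
    (hbot : ∀ x, f x ≠ ⊥) (hfin : ∃ x, f x ≠ ⊤)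
    (hconv : ∀ x y : EuclideanSpace ℝ (Fin m), ∀ a b : ℝ, 0 ≤ a → 0 ≤ b → a + b = 1 →
      f (a • x + b • y) ≤ (a : EReal) * f x + (b : EReal) * f y)
    (x u : EuclideanSpace ℝ (Fin m)) (r : ℝ) (hx : f x = (r : EReal))
    (hu : ∀ y, f x + ((⟪u, y - x⟫ : ℝ) : EReal) ≤ f y) :
    ∀ d, secondSubderiv f x r u d < ⊤ →
      firstSubderiv f x r d = ((⟪u, d⟫ : ℝ) : EReal) := by
  intro d hd
  set F : Filter (ℝ × EuclideanSpace ℝ (Fin m)) := (𝓝[>] (0 : ℝ)) ×ˢ 𝓝 d with hF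
  have hFne : F.NeBot := by
    rw [hF]; exact Filter.prod_neBot.mpr ⟨nhdsGT_neBot 0, inferInstance⟩
  set c : ℝ := ⟪u, d⟫ with hc
  set g : ℝ × EuclideanSpace ℝ (Fin m) → EReal :=
    fun p => ((p.1⁻¹ : ℝ) : EReal) * (f (x + p.1 • p.2) - (r : EReal)) with hg
  have ht_pos : ∀ᶠ p : ℝ × EuclideanSpace ℝ (Fin m) in F, 0 < p.1 :=
    Filter.Eventually.prod_inl self_mem_nhdsWithin _
  have htend_t : Filter.Tendsto (fun p : ℝ × EuclideanSpace ℝ (Fin m) => p.1) F (𝓝 0) :=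
    Filter.tendsto_fst.mono_right nhdsWithin_le_nhds
  have htend_inner : Filter.Tendsto (fun p : ℝ × EuclideanSpace ℝ (Fin m) => (⟪u, p.2⟫ : ℝ))
      F (𝓝 c) := Filter.Tendsto.inner tendsto_const_nhds Filter.tendsto_snd
  -- key pointwise facts
  have key : ∀ p : ℝ × EuclideanSpace ℝ (Fin m), 0 < p.1 →
      ((r + p.1 * ⟪u, p.2⟫ : ℝ) : EReal) ≤ f (x + p.1 • p.2) := by
    intro p hp
    have := hu (x + p.1 • p.2)
    rw [hx] at this
    have h1 : ⟪u, (x + p.1 • p.2) - x⟫ = p.1 * ⟪u, p.2⟫ := by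
      rw [add_sub_cancel_left, real_inner_smul_right]
    rw [h1] at this
    calc ((r + p.1 * ⟪u, p.2⟫ : ℝ) : EReal)
        = (r : EReal) + ((p.1 * ⟪u, p.2⟫ : ℝ) : EReal) := by rw [EReal.coe_add]
      _ ≤ f (x + p.1 • p.2) := this
  -- lower bound: liminf g ≥ c
  have hlow : ((c : ℝ) : EReal) ≤ firstSubderiv f x r d := by
    have hev : ∀ᶠ p in F, ((⟪u, p.2⟫ : ℝ) : EReal) ≤ g p := by
      filter_upwards [ht_pos] with p hp
      rcases eq_top_or_lt_top (f (x + p.1 • p.2)) with htop | hlt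
      · rw [hg]; dsimp only
        rw [htop, EReal.top_sub_coe, EReal.mul_top_of_pos]
        · exact le_top
        · exact_mod_cast inv_pos.mpr hp
      · obtain ⟨s, hs⟩ : ∃ s : ℝ, f (x + p.1 • p.2) = (s : EReal) := by
          lift f (x + p.1 • p.2) to ℝ using ⟨hlt.ne, hbot _⟩ with s
          exact ⟨s, rfl⟩
        have hk := key p hp
        rw [hs] at hk
        have hk' : r + p.1 * ⟪u, p.2⟫ ≤ s := EReal.coe_le_coe_iff.mp hk
        rw [hg]; dsimp only
        rw [hs, ← EReal.coe_sub, ← EReal.coe_mul, EReal.coe_le_coe_iff,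
          inv_mul_eq_div, le_div_iff₀ hp]
        nlinarith [hk']
    have h1 : Filter.liminf (fun p : ℝ × EuclideanSpace ℝ (Fin m) =>
        ((⟪u, p.2⟫ : ℝ) : EReal)) F = ((c : ℝ) : EReal) := by
      apply Filter.Tendsto.liminf_eq
      exact (EReal.continuous_coe_iff.mpr continuous_id).continuousAt.tendsto.comp htend_inner
    calc ((c : ℝ) : EReal) = _ := h1.symm
      _ ≤ firstSubderiv f x r d := Filter.liminf_le_liminf hev
  -- upper bound
  have hupp : firstSubderiv f x r d ≤ ((c : ℝ) : EReal) := by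
    by_contra hcon
    push_neg at hcon
    obtain ⟨b, hcb, hblim⟩ := EReal.exists_between_coe_real hcon
    -- choose M above secondSubderiv
    obtain ⟨M, hM1, hM2⟩ := EReal.exists_between_coe_real hd
    have hfreq : ∃ᶠ p in F,
        ((2 / p.1 ^ 2 : ℝ) : EReal) * (f (x + p.1 • p.2) - ((r + p.1 * ⟪u, p.2⟫ : ℝ) : EReal))
          < (M : EReal) := Filter.frequently_lt_of_liminf_lt (by isBoundedDefault) hM1
    have hev2 : ∀ᶠ p : ℝ × EuclideanSpace ℝ (Fin m) in F,
        ⟪u, p.2⟫ + M * p.1 / 2 < b ∧ 0 < p.1 := by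
      have htb : Filter.Tendsto (fun p : ℝ × EuclideanSpace ℝ (Fin m) =>
          ⟪u, p.2⟫ + M * p.1 / 2) F (𝓝 (c + M * 0 / 2)) := by
        exact htend_inner.add ((htend_t.const_mul M).div_const 2)
      have hcb' : c + M * 0 / 2 < b := by
        simpa using (EReal.coe_lt_coe_iff.mp hcb)
      exact ((htb.eventually_lt_const hcb').and ht_pos)
    have hfreq2 : ∃ᶠ p in F, g p ≤ ((b : ℝ) : EReal) := by
      refine (hfreq.and_eventually hev2).mono ?_
      rintro p ⟨hpM, hpb, hpt⟩
      obtain ⟨s, hs⟩ : ∃ s : ℝ, f (x + p.1 • p.2) = (s : EReal) := by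
        rcases eq_top_or_lt_top (f (x + p.1 • p.2)) with htop | hlt
        · exfalso
          rw [htop, EReal.top_sub_coe, EReal.mul_top_of_pos] at hpM
          · exact not_top_lt hpM
          · exact_mod_cast div_pos two_pos (pow_pos hpt 2)
        · lift f (x + p.1 • p.2) to ℝ using ⟨hlt.ne, hbot _⟩ with s
          exact ⟨s, rfl⟩
      rw [hs] at hpM
      rw [← EReal.coe_sub, ← EReal.coe_mul, EReal.coe_lt_coe_iff] at hpM
      -- real arithmetic
      have ht2 : (0:ℝ) < p.1 ^ 2 := pow_pos hpt 2
      have hsr : s - (r + p.1 * ⟪u, p.2⟫) < M * p.1 ^ 2 / 2 := by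
        have h2 := mul_lt_mul_of_pos_right hpM (half_pos ht2)
        have heq : 2 / p.1 ^ 2 * (s - (r + p.1 * ⟪u, p.2⟫)) * (p.1 ^ 2 / 2)
            = s - (r + p.1 * ⟪u, p.2⟫) := by field_simp
        rw [heq] at h2
        linarith [h2]
      have hgp : p.1⁻¹ * (s - r) ≤ b := by
        rw [inv_mul_eq_div, div_le_iff₀ hpt]
        nlinarith [mul_lt_mul_of_pos_left hpb hpt]
      rw [hg]; dsimp only
      rw [hs, ← EReal.coe_sub, ← EReal.coe_mul, EReal.coe_le_coe_iff]
      exact hgp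
    have : firstSubderiv f x r d ≤ ((b : ℝ) : EReal) :=
      Filter.liminf_le_of_frequently_le hfreq2
    exact absurd (lt_of_lt_of_le hblim this) (lt_irrefl _)
  exact le_antisymm hupp hlow
end

section
/- Abstract form of the SSOSC-implies-nonsingularity argument: Let A ∈ ℝ^{n×n} be symmetric, B ∈ ℝ^{m×n}, and U ∈ ℝ^{m×m}. Define Γ : ℝ^m → ℝ ∪ {∞} by Γ(v) := inf { ⟨v, d − v⟩ | d ∈ ℝ^m, v = U d } (with Γ(v) = +∞ if v ∉ rge U). Suppose (Δx, Δu) ∈ ℝ^n × ℝ^m satisfies A Δx + Bᵀ Δu = 0 and B Δx = U(B Δx + Δu), and suppose that ⟨A d, d⟩ + Γ(B d) > 0 for all d ≠ 0 with B d ∈ rge U. Then Δx = 0. -/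
open Matrix

/-- The second-order variational function `Γ(v) := inf {⟨v, d − v⟩ | v = U d}`,
with value `+∞` when `v ∉ rge U`. -/
noncomputable def Gam {m : ℕ} (U : Matrix (Fin m) (Fin m) ℝ) (v : Fin m → ℝ) : EReal :=
  ⨅ d ∈ {d : Fin m → ℝ | v = U.mulVec d}, ((v ⬝ᵥ (d - v) : ℝ) : EReal)

theorem stmt12 {n m : ℕ} (A : Matrix (Fin n) (Fin n) ℝ) (hA : A.IsSymm)
    (B : Matrix (Fin m) (Fin n) ℝ) (U : Matrix (Fin m) (Fin m) ℝ)
    (Δx : Fin n → ℝ) (Δu : Fin m → ℝ)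
    (heq1 : A.mulVec Δx + Bᵀ.mulVec Δu = 0)
    (heq2 : B.mulVec Δx = U.mulVec (B.mulVec Δx + Δu))
    (hSSOSC : ∀ d : Fin n → ℝ, d ≠ 0 → (∃ w, U.mulVec w = B.mulVec d) →
      (0 : EReal) < ((A.mulVec d ⬝ᵥ d : ℝ) : EReal) + Gam U (B.mulVec d)) :
    Δx = 0 := by
  by_contra hne
  set v := B.mulVec Δx with hv
  have hrge : ∃ w, U.mulVec w = v := ⟨v + Δu, heq2.symm⟩
  have hpos := hSSOSC Δx hne hrge
  have hmem : (v + Δu) ∈ {d : Fin m → ℝ | v = U.mulVec d} := heq2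
  have hGam : Gam U v ≤ ((v ⬝ᵥ Δu : ℝ) : EReal) := by
    have h := iInf₂_le (f := fun d _ => ((v ⬝ᵥ (d - v) : ℝ) : EReal)) (v + Δu) hmem
    rw [add_sub_cancel_left] at h
    exact h
  have hAmv : A.mulVec Δx = -(Bᵀ.mulVec Δu) := eq_neg_of_add_eq_zero_left heq1
  have hquad : A.mulVec Δx ⬝ᵥ Δx = -(v ⬝ᵥ Δu) := by
    rw [hAmv, neg_dotProduct, neg_inj, Matrix.mulVec_transpose,
      ← Matrix.dotProduct_mulVec, hv, dotProduct_comm]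
  rw [hquad] at hpos
  have : ((-(v ⬝ᵥ Δu) : ℝ) : EReal) + Gam U v ≤
      ((-(v ⬝ᵥ Δu) : ℝ) : EReal) + ((v ⬝ᵥ Δu : ℝ) : EReal) := add_le_add_right hGam _
  rw [← EReal.coe_add, neg_add_cancel] at this
  exact absurd (lt_of_lt_of_le hpos this) (by simp)
end
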